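/- arXiv:1102.4981 — 3 statements merged into one kernel-verified Lean document; each statement's English description precedes it below -/
import Mathlib

section
/- For any nonempty subset S of internal nodes of a complete binary tree T with the root excluded (S ⊆ I(V_T) \ {r(T)}), if the subgraph of T induced by S has m connected components, then the node boundary of S in T has cardinality at least |S| + m + 1. -/
/-- Vertices of the complete binary tree of height `h`: lists of booleans of
length at most `h`, recorded from the vertex up to the root (so the root is `[]`,
and a child of `v` is `b :: v` for a bit `b`). The depth of a vertex is the
length of its list. -/
def CBTVert (h : ℕ) : Type := {l : List Bool // l.length ≤ h}

/-- The complete binary tree of height `h` as a simple graph: `u` and `v` are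
adjacent iff one is a child of the other. -/
def cbt (h : ℕ) : SimpleGraph (CBTVert h) where
  Adj u v := (∃ b, u.1 = b :: v.1) ∨ (∃ b, v.1 = b :: u.1)
  symm := by constructor; intro u v hv; tauto
  loopless := by
    constructor
    rintro u (⟨b, hb⟩ | ⟨b, hb⟩) <;>
      simpa using congrArg List.length hb

/-- The node boundary of a set `S`: vertices outside `S` adjacent to some vertex of `S`. -/
def nbd {V : Type*} (G : SimpleGraph V) (S : Set V) : Set V :=
  {v | v ∉ S ∧ ∃ u ∈ S, G.Adj u v}

/-- Leaves are the vertices of maximal depth (the tree is complete). -/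
def isLeaf {h : ℕ} (v : CBTVert h) : Prop := v.1.length = h

/-- Internal nodes are the non-leaf vertices. -/
def isInternal {h : ℕ} (v : CBTVert h) : Prop := v.1.length < h

/-- The root of the complete binary tree. -/
def root (h : ℕ) : CBTVert h := ⟨[], by simp⟩

/-- `desc x v` means `v` belongs to the subtree rooted at `x`
(`x`'s list is a suffix of `v`'s list). -/
def desc {h : ℕ} (x v : CBTVert h) : Prop := x.1 <:+ v.1

/-- The subtree rooted at `x` is `S`-occupied if all its leaves belong to `S`. -/
def occupied {h : ℕ} (S : Set (CBTVert h)) (x : CBTVert h) : Prop :=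
  ∀ v : CBTVert h, desc x v → isLeaf v → v ∈ S

/-- The subtree rooted at `x` is a maximal `S`-occupied subtree. -/
def maxOccupied {h : ℕ} (S : Set (CBTVert h)) (x : CBTVert h) : Prop :=
  occupied S x ∧ ∀ y, desc y x → occupied S y → y = x

-- auxiliary
instance CBT.finite (h : ℕ) : Finite (CBTVert h) :=
  (List.finite_length_le Bool h).to_subtype

def par {h : ℕ} (v : CBTVert h) : CBTVert h :=
  ⟨v.1.tail, le_trans (by simpa using Nat.sub_le _ _) v.2⟩

lemma par_length_lt {h : ℕ} (v : CBTVert h) (hv : v.1 ≠ []) :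
    (par v).1.length < v.1.length := by
  have h1 : (par v).1.length = v.1.length - 1 := by simp [par]
  have h2 : 0 < v.1.length := List.length_pos_iff.mpr hv
  omega

def childF {h : ℕ} (p : CBTVert h × Bool) : CBTVert h :=
  if hl : p.1.1.length < h then ⟨p.2 :: p.1.1, hl⟩ else p.1

lemma childF_spec {h : ℕ} (v : CBTVert h) (b : Bool) (hv : v.1.length < h) :
    (childF (v, b)).1 = b :: v.1 := by
  simp [childF, hv]

/-- Everything reachable from a "top" vertex descends from it. -/
lemma suffix_of_walk {h : ℕ} {S : Set (CBTVert h)} {v : CBTVert h}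
    (hp : par v ∉ S) :
    ∀ (x u : S) (p : ((cbt h).induce S).Walk x u), v.1 <:+ x.1.1 → v.1 <:+ u.1.1 := by
  intro x u p
  induction p with
  | nil => exact id
  | @cons a c u hadj q ih =>
    intro hax
    refine ih ?_
    rcases hadj with ⟨b, hb⟩ | ⟨b, hb⟩
    · -- a.1.1 = b :: c.1.1
      have hb' : a.1.1 = b :: c.1.1 := hb
      rw [hb'] at hax
      rcases List.suffix_cons_iff.mp hax with heq | hsuf
      · exfalso
        apply hp
        have h1 : (par v).1 = c.1.1 := by simp [par, heq]
        have h2 : par v = c.1 := Subtype.ext h1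
        rw [h2]; exact c.2
      · exact hsuf
    · -- c.1.1 = b :: a.1.1
      have hb' : c.1.1 = b :: a.1.1 := hb
      rw [hb']
      exact hax.trans (List.suffix_cons b _)


/-- Lemma 2: for a nonempty set S of internal nodes excluding the root whose
induced subgraph has m connected components, the node boundary has size at
least |S| + m + 1. -/
theorem stmt1 (h m : ℕ) (S : Set (CBTVert h)) (hne : S.Nonempty)
    (hint : ∀ v ∈ S, isInternal v) (hroot : root h ∉ S)
    (hm : Nat.card ((cbt h).induce S).ConnectedComponent = m) :
    (nbd (cbt h) S).ncard ≥ S.ncard + m + 1 := by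
  classical
  -- vertices in S have nonempty lists
  have hnonnil : ∀ v ∈ S, v.1 ≠ [] := by
    intro v hv hnil
    exact hroot (by rwa [show v = root h from Subtype.ext (by simp [root, hnil])] at hv)
  -- Tops
  set Tops : Set (CBTVert h) := {v | v ∈ S ∧ par v ∉ S} with hTops
  have hTS : Tops ⊆ S := fun v hv => hv.1
  -- parent adjacency: if v has a nonempty list, v is adjacent to par v
  have hadj_par : ∀ v : CBTVert h, v.1 ≠ [] → (cbt h).Adj v (par v) := by
    intro v hv
    left
    rcases v with ⟨l, hl⟩
    cases l with
    | nil => exact absurd rfl hv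
    | cons a t => exact ⟨a, by simp [par]⟩
  -- the map from Tops to components
  have key : Nat.card Tops = Nat.card ((cbt h).induce S).ConnectedComponent := by
    apply Nat.card_eq_of_bijective
      (fun t : Tops =>
        ((cbt h).induce S).connectedComponentMk (⟨t.1, t.2.1⟩ : S))
    constructor
    · rintro ⟨v, hv⟩ ⟨w, hw⟩ hvw
      have hr : ((cbt h).induce S).Reachable ⟨v, hv.1⟩ ⟨w, hw.1⟩ :=
        SimpleGraph.ConnectedComponent.exact hvw
      obtain ⟨p⟩ := hr
      have h1 : v.1 <:+ w.1 := suffix_of_walk hv.2 _ _ p List.suffix_rfl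
      have h2 : w.1 <:+ v.1 := suffix_of_walk hw.2 _ _ p.reverse List.suffix_rfl
      exact Subtype.ext (Subtype.ext (h1.eq_of_length_le h2.length_le))
    · intro c
      obtain ⟨u, hu⟩ := c.exists_rep
      obtain ⟨t, ht, htmin⟩ := Set.exists_min_image
        {w : S | ((cbt h).induce S).connectedComponentMk w = c}
        (fun w => w.1.1.length) (Set.toFinite _) ⟨u, hu⟩
      refine ⟨⟨t.1, t.2, ?_⟩, ht⟩
      intro hpt
      have hadj : ((cbt h).induce S).Adj t ⟨par t.1, hpt⟩ :=
        hadj_par t.1 (hnonnil _ t.2)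
      have hmem : (⟨par t.1, hpt⟩ : S) ∈
          {w : S | ((cbt h).induce S).connectedComponentMk w = c} := by
        simp only [Set.mem_setOf_eq] at ht ⊢
        rw [← ht]
        exact SimpleGraph.ConnectedComponent.sound hadj.symm.reachable
      have hle := htmin _ hmem
      have hlt := par_length_lt t.1 (hnonnil _ t.2)
      simp only at hle
      omega
  -- |Tops| = m
  have hTm : Tops.ncard = m := by
    rw [← Nat.card_coe_set_eq, key, hm]
  -- children of S, as a set
  set CA : Set (CBTVert h) :=
    (fun v => childF (v, false)) '' S ∪ (fun v => childF (v, true)) '' S with hCA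
  have hmemCA : ∀ w, w ∈ CA ↔ ∃ v ∈ S, ∃ b, w = childF (v, b) := by
    intro w
    simp only [hCA, Set.mem_union, Set.mem_image]
    constructor
    · rintro (⟨v, hv, rfl⟩ | ⟨v, hv, rfl⟩)
      exacts [⟨v, hv, false, rfl⟩, ⟨v, hv, true, rfl⟩]
    · rintro ⟨v, hv, b, rfl⟩
      cases b
      · exact Or.inl ⟨v, hv, rfl⟩
      · exact Or.inr ⟨v, hv, rfl⟩
  have hinj : ∀ b : Bool, Set.InjOn (fun v => childF (v, b)) S := by
    intro b v hv w hw heq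
    have h1 := childF_spec v b (hint v hv)
    have h2 := childF_spec w b (hint w hw)
    simp only at heq
    rw [heq, h2] at h1
    exact Subtype.ext (List.cons_eq_cons.mp h1.symm).2
  have hCAcard : CA.ncard = 2 * S.ncard := by
    rw [hCA, Set.ncard_union_eq, Set.ncard_image_of_injOn (hinj false),
      Set.ncard_image_of_injOn (hinj true)]
    · ring
    · rw [Set.disjoint_left]
      rintro w ⟨v, hv, rfl⟩ ⟨v', hv', heq⟩
      have h1 := childF_spec v false (hint v hv)
      have h2 := childF_spec v' true (hint v' hv')
      simp only at heq
      rw [heq] at h2; rw [h2] at h1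
      exact absurd (List.cons_eq_cons.mp h1.symm).1 (by simp)
  -- CA ∩ S = S \ Tops
  have hCAS : CA ∩ S = S \ Tops := by
    ext u
    constructor
    · rintro ⟨hca, huS⟩
      obtain ⟨v, hv, b, rfl⟩ := (hmemCA u).mp hca
      refine ⟨huS, fun hutop => hutop.2 ?_⟩
      have hc := childF_spec v b (hint v hv)
      have : par (childF (v, b)) = v := Subtype.ext (by simp [par, hc])
      rwa [this]
    · rintro ⟨huS, hunt⟩
      have hpu : par u ∈ S := by
        by_contra hh
        exact hunt ⟨huS, hh⟩
      refine ⟨(hmemCA u).mpr ⟨par u, hpu, u.1.head (hnonnil _ huS), ?_⟩, huS⟩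
      apply Subtype.ext
      rw [childF_spec _ _ (hint _ hpu)]
      exact (List.cons_head_tail (hnonnil _ huS)).symm
  -- CB
  set CB : Set (CBTVert h) := CA \ S with hCB
  have hCBdisj : CA \ S = CA \ (CA ∩ S) := by
    ext u; simp only [Set.mem_diff, Set.mem_inter_iff]; tauto
  have hCBcard : CB.ncard + (CA ∩ S).ncard = CA.ncard := by
    rw [hCB, hCBdisj]
    exact Set.ncard_diff_add_ncard_of_subset Set.inter_subset_left (Set.toFinite _)
  have hSsplit : (S \ Tops).ncard + Tops.ncard = S.ncard :=
    Set.ncard_diff_add_ncard_of_subset hTS (Set.toFinite _)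
  -- CB ⊆ nbd
  have hCBnbd : CB ⊆ nbd (cbt h) S := by
    rintro u ⟨hca, huS⟩
    obtain ⟨v, hv, b, rfl⟩ := (hmemCA u).mp hca
    exact ⟨huS, v, hv, Or.inr ⟨b, childF_spec v b (hint v hv)⟩⟩
  -- minimal element of S
  obtain ⟨t, htS, htmin⟩ := Set.exists_min_image S (fun v => v.1.length)
    (Set.toFinite _) hne
  set p := par t with hp
  have hplt : p.1.length < t.1.length := par_length_lt t (hnonnil _ htS)
  have hpS : p ∉ S := by
    intro hpmem
    have := htmin _ hpmem
    omega
  have hpnbd : p ∈ nbd (cbt h) S := ⟨hpS, t, htS, hadj_par t (hnonnil _ htS)⟩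
  have hpCB : p ∉ CB := by
    rintro ⟨hca, -⟩
    obtain ⟨v, hv, b, heq⟩ := (hmemCA p).mp hca
    have hc := childF_spec v b (hint v hv)
    rw [← heq] at hc
    have h1 := htmin _ hv
    have h2 : p.1.length = v.1.length + 1 := by rw [hc]; simp
    omega
  -- final count
  have hsub : insert p CB ⊆ nbd (cbt h) S := by
    rintro u (rfl | hu)
    · exact hpnbd
    · exact hCBnbd hu
  have hins : (insert p CB).ncard = CB.ncard + 1 :=
    Set.ncard_insert_of_notMem hpCB (Set.toFinite _)
  have hfinal := Set.ncard_le_ncard hsub (Set.toFinite _)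
  rw [hins] at hfinal
  rw [hCAS] at hCBcard
  omega
end

section
/- Let X be a subtree of a complete binary tree T. For any subset S of the internal nodes of X, the number of nodes of X lying in the node boundary of S satisfies |∂S ∩ V_X| ≥ |S ∩ V_X|; moreover, if S is nonempty then |∂S ∩ V_X| ≥ |S ∩ V_X| + 1. -/
instance cbtFinite (h : ℕ) : Finite (CBTVert h) :=
  (List.finite_length_le Bool h).to_subtype

/-- Corollary 1: for a subtree X of T (rooted at x) and any set S of internal
nodes of X, the part of the node boundary of S inside X is at least as large
as S ∩ V_X, and strictly larger if S is nonempty. -/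
theorem stmt2 (h : ℕ) (x : CBTVert h) (S : Set (CBTVert h))
    (hS : S ⊆ {v | desc x v ∧ isInternal v}) :
    (nbd (cbt h) S ∩ {v | desc x v}).ncard ≥ (S ∩ {v | desc x v}).ncard ∧
      (S.Nonempty →
        (nbd (cbt h) S ∩ {v | desc x v}).ncard ≥ (S ∩ {v | desc x v}).ncard + 1) := by
  have hSd : S ⊆ {v | desc x v} := fun v hv => (hS hv).1
  have hSeq : S ∩ {v | desc x v} = S := Set.inter_eq_self_of_subset_left hSd
  rw [hSeq]
  have key : S.Nonempty → (nbd (cbt h) S ∩ {v | desc x v}).ncard ≥ S.ncard + 1 := by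
    intro hne
    -- the children map
    set ch : Bool → CBTVert h → CBTVert h := fun b v =>
      if hv : v.1.length < h then ⟨b :: v.1, hv⟩ else v with hch
    have hchS : ∀ b, ∀ v ∈ S, (ch b v).1 = b :: v.1 := by
      intro b v hv
      have hlt : v.1.length < h := (hS hv).2
      simp [hch, hlt]
    have hinj : ∀ b, Set.InjOn (ch b) S := by
      intro b u hu v hv huv
      have : (b : Bool) :: u.1 = b :: v.1 := by
        rw [← hchS b u hu, ← hchS b v hv, huv]
      exact Subtype.ext (List.cons_injective this)
    set Ch : Set (CBTVert h) := ch true '' S ∪ ch false '' S with hCh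
    -- every member of Ch is a child of a member of S
    have hChmem : ∀ u ∈ Ch, ∃ v ∈ S, ∃ b, u.1 = b :: v.1 := by
      rintro u (⟨v, hv, rfl⟩ | ⟨v, hv, rfl⟩)
      · exact ⟨v, hv, true, hchS true v hv⟩
      · exact ⟨v, hv, false, hchS false v hv⟩
    -- Ch has cardinality 2 |S|
    have hdisj : Disjoint (ch true '' S) (ch false '' S) := by
      rw [Set.disjoint_left]
      rintro u ⟨v, hv, rfl⟩ ⟨w, hw, hwu⟩
      have h1 := hchS true v hv
      have h2 := hchS false w hw
      rw [hwu] at h2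
      rw [h1] at h2
      simp at h2
    have hChcard : Ch.ncard = 2 * S.ncard := by
      rw [hCh, Set.ncard_union_eq hdisj (Set.toFinite _) (Set.toFinite _),
        Set.ncard_image_of_injOn (hinj true), Set.ncard_image_of_injOn (hinj false)]
      ring
    -- minimal-depth element of S
    obtain ⟨m, hmS, hmin⟩ := Set.exists_min_image S (fun v => v.1.length) S.toFinite hne
    have hsub : Ch ∩ S ⊆ S \ {m} := by
      rintro u ⟨huCh, huS⟩
      refine ⟨huS, ?_⟩
      obtain ⟨v, hv, b, hb⟩ := hChmem u huCh
      intro hum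
      have h1 : u.1.length = v.1.length + 1 := by rw [hb]; simp
      have h2 := hmin u huS
      have h3 := hmin v hv
      simp only [Set.mem_singleton_iff] at hum
      subst hum
      omega
    have hcs : (Ch ∩ S).ncard ≤ S.ncard - 1 := by
      calc (Ch ∩ S).ncard ≤ (S \ {m}).ncard :=
            Set.ncard_le_ncard hsub (Set.toFinite _)
        _ = S.ncard - 1 := Set.ncard_diff_singleton_of_mem hmS
    have hdiffeq : Ch \ S = Ch \ (Ch ∩ S) := by
      ext u; simp [and_comm]
    have hdiff : (Ch \ S).ncard = Ch.ncard - (Ch ∩ S).ncard := by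
      rw [hdiffeq]
      exact Set.ncard_diff Set.inter_subset_left (Set.toFinite _)
    -- Ch \ S lies in the boundary inside the subtree
    have hbd : Ch \ S ⊆ nbd (cbt h) S ∩ {v | desc x v} := by
      rintro u ⟨huCh, huS⟩
      obtain ⟨v, hv, b, hb⟩ := hChmem u huCh
      refine ⟨⟨huS, v, hv, Or.inr ⟨b, hb⟩⟩, ?_⟩
      have hxv : x.1 <:+ v.1 := (hS hv).1
      have : v.1 <:+ u.1 := by rw [hb]; exact List.suffix_cons b v.1
      exact hxv.trans this
    have hfin : (nbd (cbt h) S ∩ {v | desc x v}).ncard ≥ (Ch \ S).ncard :=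
      Set.ncard_le_ncard hbd (Set.toFinite _)
    have hpos : 0 < S.ncard := (Set.ncard_pos S.toFinite).mpr hne
    omega
  constructor
  · rcases S.eq_empty_or_nonempty with rfl | hne
    · simp
    · have := key hne; omega
  · exact key
end

section
/- The sum ∑_{s=1}^{n/2} (s/16) · 2^{0.841 s} · (s/n)^{0.854 s} tends to 0 as n → ∞. -/
open Filter Real

/-- The final union-bound estimate: ∑_{s=1}^{n/2} (s/16) 2^{0.841 s} (s/n)^{0.854 s}
tends to 0 as n → ∞. -/
theorem stmt16 :
    Filter.Tendsto
      (fun n : ℕ => ∑ s ∈ Finset.Icc 1 (n / 2),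
        ((s : ℝ) / 16) * (2 : ℝ) ^ ((0.841 : ℝ) * s) *
          ((s : ℝ) / n) ^ ((0.854 : ℝ) * s))
      Filter.atTop (nhds 0) := by
  set c : ℝ := (2:ℝ) ^ (0.841:ℝ) * ((1:ℝ)/2) ^ (0.854:ℝ) with hc
  have hc0 : 0 ≤ c := by positivity
  have hc1 : c < 1 := by
    have h1 : ((1:ℝ)/2) ^ (0.854:ℝ) = (2:ℝ) ^ (-(0.854:ℝ)) := by
      rw [one_div, Real.inv_rpow (by norm_num), ← Real.rpow_neg (by norm_num)]
    have h2 : c = (2:ℝ) ^ ((0.841:ℝ) + -(0.854:ℝ)) := by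
      rw [hc, h1, ← Real.rpow_add (by norm_num : (0:ℝ) < 2)]
    rw [h2]
    exact Real.rpow_lt_one_of_one_lt_of_neg one_lt_two (by norm_num)
  set t : ℕ → ℕ → ℝ := fun n s =>
    ((s : ℝ) / 16) * (2 : ℝ) ^ ((0.841 : ℝ) * s) * ((s : ℝ) / n) ^ ((0.854 : ℝ) * s)
    with ht
  set F : ℕ → ℕ → ℝ := fun n s => if s ∈ Finset.Icc 1 (n / 2) then t n s else 0 with hF
  have hFpos : ∀ {n s : ℕ}, s ∈ Finset.Icc 1 (n/2) → F n s = t n s := by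
    intro n s hs; simp only [hF]; rw [if_pos hs]
  have hFneg : ∀ {n s : ℕ}, s ∉ Finset.Icc 1 (n/2) → F n s = 0 := by
    intro n s hs; simp only [hF]; rw [if_neg hs]
  have hsum_eq : ∀ n, (∑' s, F n s) = ∑ s ∈ Finset.Icc 1 (n / 2), t n s := by
    intro n
    rw [tsum_eq_sum (s := Finset.Icc 1 (n/2)) (fun b hb => hFneg hb)]
    exact Finset.sum_congr rfl fun s hs => hFpos hs
  set g : ℕ → ℝ := fun s => (1/16 : ℝ) * ((s:ℝ) ^ 1 * c ^ s) with hg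
  have hgsum : Summable g :=
    (summable_pow_mul_geometric_of_norm_lt_one (R := ℝ) 1
      (by rwa [Real.norm_eq_abs, abs_of_nonneg hc0])).mul_left _
  have hbound : ∀ n, ∀ s, ‖F n s‖ ≤ g s := by
    intro n s
    have hg0 : 0 ≤ g s := by positivity
    by_cases hs : s ∈ Finset.Icc 1 (n/2)
    · rw [hFpos hs]
      have h2s : s ≤ n / 2 := (Finset.mem_Icc.mp hs).2
      have h1s : 1 ≤ s := (Finset.mem_Icc.mp hs).1
      have hsn : 2 * s ≤ n := by omega
      have hn0 : 0 < (n:ℝ) := by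
        have : 0 < n := by omega
        exact_mod_cast this
      have hle : (s:ℝ)/n ≤ 1/2 := by
        rw [div_le_div_iff₀ hn0 (by norm_num)]
        have : (2:ℝ) * s ≤ n := by exact_mod_cast hsn
        linarith
      have hkey : ((s:ℝ)/n) ^ ((0.854:ℝ) * s) ≤ ((1:ℝ)/2) ^ ((0.854:ℝ) * s) :=
        Real.rpow_le_rpow (by positivity) hle (by positivity)
      have ht0 : 0 ≤ t n s := by
        rw [ht]; positivity
      rw [Real.norm_eq_abs, abs_of_nonneg ht0]
      have step : t n s ≤ ((s : ℝ) / 16) * (2 : ℝ) ^ ((0.841 : ℝ) * s) *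
          ((1:ℝ)/2) ^ ((0.854 : ℝ) * s) := by
        rw [ht]
        exact mul_le_mul_of_nonneg_left hkey (by positivity)
      refine step.trans (le_of_eq ?_)
      have e1 : (2:ℝ) ^ ((0.841:ℝ) * s) = ((2:ℝ) ^ (0.841:ℝ)) ^ s := by
        rw [Real.rpow_mul (by norm_num), Real.rpow_natCast]
      have e2 : ((1:ℝ)/2) ^ ((0.854:ℝ) * s) = (((1:ℝ)/2) ^ (0.854:ℝ)) ^ s := by
        rw [Real.rpow_mul (by norm_num), Real.rpow_natCast]
      rw [e1, e2]
      show _ = (1/16 : ℝ) * ((s:ℝ) ^ 1 * ((2:ℝ) ^ (0.841:ℝ) * ((1:ℝ)/2) ^ (0.854:ℝ)) ^ s)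
      rw [mul_pow]; ring
    · rw [hFneg hs]; simpa using hg0
  have hptwise : ∀ s, Tendsto (fun n => F n s) atTop (nhds 0) := by
    intro s
    by_cases hs1 : 1 ≤ s
    · have hev : ∀ᶠ n in atTop, t n s = F n s := by
        filter_upwards [eventually_ge_atTop (2*s)] with n hn
        exact (hFpos (Finset.mem_Icc.mpr ⟨hs1, by omega⟩)).symm
      have hlim : Tendsto (fun n : ℕ => t n s) atTop (nhds 0) := by
        have hdiv : Tendsto (fun n : ℕ => (s:ℝ)/n) atTop (nhds 0) :=
          tendsto_const_div_atTop_nhds_zero_nat _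
        have hq : 0 < (0.854:ℝ) * s := by
          have : (1:ℝ) ≤ s := by exact_mod_cast hs1
          nlinarith
        have hcont : ContinuousAt (fun x : ℝ => x ^ ((0.854:ℝ) * s)) 0 :=
          Real.continuousAt_rpow_const 0 _ (Or.inr hq.le)
        have hrpow : Tendsto (fun n : ℕ => ((s:ℝ)/n) ^ ((0.854:ℝ) * s)) atTop
            (nhds ((0:ℝ) ^ ((0.854:ℝ) * s))) := (hcont.tendsto).comp hdiv
        rw [Real.zero_rpow hq.ne'] at hrpow
        have := hrpow.const_mul (((s : ℝ) / 16) * (2 : ℝ) ^ ((0.841 : ℝ) * s))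
        simpa [ht, mul_assoc] using this
      exact hlim.congr' hev
    · have hz : ∀ n, F n s = 0 := fun n =>
        hFneg (by simp [Finset.mem_Icc]; omega)
      simp only [hz]
      exact tendsto_const_nhds
  have main := tendsto_tsum_of_dominated_convergence (f := F) (g := fun _ => (0:ℝ))
    hgsum hptwise (Eventually.of_forall hbound)
  rw [tsum_zero] at main
  refine main.congr fun n => ?_
  rw [hsum_eq]
end
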